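/- Let A and B be normal complex n×n matrices, λ ∈ ℂ and ε ≥ 0. Let R(M, λ, ε) denote the subspace of ℂⁿ spanned by all eigenvectors of M whose eigenvalue α satisfies |λ − α| ≤ ε. Then |dim R(A, λ, ε) − dim R(B, λ, ε)| ≤ rank(A − B). -/

import Mathlib

/-- The span of eigenvectors of `M` with eigenvalue within `ε` of `λ`. -/
noncomputable def eigSpan {n : ℕ} (M : Matrix (Fin n) (Fin n) ℂ) (lam : ℂ) (ε : ℝ) :
    Submodule ℂ (Fin n → ℂ) :=
  Submodule.span ℂ {v | v ≠ 0 ∧ ∃ α : ℂ, ‖lam - α‖ ≤ ε ∧ M.mulVec v = α • v}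

open Matrix Module Complex

namespace EigAux

variable {n : ℕ}

/-- Hermitian inner product on `Fin n → ℂ`. -/
noncomputable def inn (v w : Fin n → ℂ) : ℂ := star v ⬝ᵥ w

lemma inn_self_eq (v : Fin n → ℂ) :
    inn v v = ((∑ i, Complex.normSq (v i) : ℝ) : ℂ) := by
  simp only [inn, dotProduct, Pi.star_apply, Complex.star_def]
  push_cast
  exact Finset.sum_congr rfl fun i _ => (Complex.normSq_eq_conj_mul_self).symm ▸ rfl

lemma inn_self_re_nonneg (v : Fin n → ℂ) : 0 ≤ (inn v v).re := by
  rw [inn_self_eq, Complex.ofReal_re]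
  exact Finset.sum_nonneg fun i _ => Complex.normSq_nonneg _

lemma inn_self_re_pos {v : Fin n → ℂ} (hv : v ≠ 0) : 0 < (inn v v).re := by
  rw [inn_self_eq, Complex.ofReal_re]
  obtain ⟨i, hi⟩ := Function.ne_iff.mp hv
  exact Finset.sum_pos' (fun j _ => Complex.normSq_nonneg _)
    ⟨i, Finset.mem_univ i, Complex.normSq_pos.mpr hi⟩

lemma eq_zero_of_inn_self {v : Fin n → ℂ} (h : inn v v = 0) : v = 0 := by
  by_contra hv
  exact absurd h (by have := inn_self_re_pos hv; intro h0; rw [h0] at this; simp at this)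

lemma inn_zero_right (v : Fin n → ℂ) : inn v 0 = 0 := by simp [inn]

lemma inn_smul_left (c : ℂ) (v w : Fin n → ℂ) :
    inn (c • v) w = (starRingEnd ℂ c) * inn v w := by
  simp [inn, star_smul, smul_dotProduct, smul_eq_mul, Complex.star_def]

lemma inn_smul_right (c : ℂ) (v w : Fin n → ℂ) :
    inn v (c • w) = c * inn v w := by
  simp [inn, dotProduct_smul, smul_eq_mul]

lemma inn_sum_left {ι : Type*} (s : Finset ι) (f : ι → Fin n → ℂ) (w : Fin n → ℂ) :
    inn (∑ i ∈ s, f i) w = ∑ i ∈ s, inn (f i) w := by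
  simp only [inn, star_sum, dotProduct, Finset.sum_apply, Finset.sum_mul]
  exact Finset.sum_comm

lemma inn_sum_right {ι : Type*} (s : Finset ι) (v : Fin n → ℂ) (f : ι → Fin n → ℂ) :
    inn v (∑ i ∈ s, f i) = ∑ i ∈ s, inn v (f i) := by
  simp only [inn, dotProduct, Finset.sum_apply, Finset.mul_sum]
  exact Finset.sum_comm

lemma adjoint (M : Matrix (Fin n) (Fin n) ℂ) (v w : Fin n → ℂ) :
    inn (M.mulVec v) w = inn v (Mᴴ.mulVec w) := by
  rw [inn, inn, star_mulVec, dotProduct_mulVec]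

lemma adjoint' (M : Matrix (Fin n) (Fin n) ℂ) (v w : Fin n → ℂ) :
    inn v (M.mulVec w) = inn (Mᴴ.mulVec v) w := by
  rw [adjoint, conjTranspose_conjTranspose]


variable {M : Matrix (Fin n) (Fin n) ℂ}

lemma normal_sub (hM : M * Mᴴ = Mᴴ * M) (α : ℂ) :
    (M - α • 1) * (M - α • 1)ᴴ = (M - α • 1)ᴴ * (M - α • 1) := by
  have h1 : α * star α = star α * α := mul_comm _ _
  simp only [conjTranspose_sub, conjTranspose_smul, conjTranspose_one, sub_mul, mul_sub,
    Matrix.smul_mul, Matrix.mul_smul, one_mul, mul_one, smul_smul, hM, h1]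
  abel

lemma star_eig (hM : M * Mᴴ = Mᴴ * M) {v : Fin n → ℂ} {α : ℂ}
    (hv : M.mulVec v = α • v) :
    Mᴴ.mulVec v = (starRingEnd ℂ α) • v := by
  set N := M - α • 1 with hN
  have hNv : N.mulVec v = 0 := by
    simp [hN, sub_mulVec, smul_mulVec, one_mulVec, hv]
  have key : inn (Nᴴ.mulVec v) (Nᴴ.mulVec v) = 0 := by
    rw [adjoint, conjTranspose_conjTranspose, mulVec_mulVec, normal_sub hM α,
      ← mulVec_mulVec, hNv, mulVec_zero, inn_zero_right]
  have h0 : Nᴴ.mulVec v = 0 := eq_zero_of_inn_self key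
  have h2 : Mᴴ.mulVec v - (starRingEnd ℂ α) • v = 0 := by
    simpa [hN, conjTranspose_sub, conjTranspose_smul, conjTranspose_one, sub_mulVec,
      smul_mulVec, one_mulVec, Complex.star_def] using h0
  linear_combination (norm := module) h2

lemma inn_eig_orth (hM : M * Mᴴ = Mᴴ * M) {v w : Fin n → ℂ} {α β : ℂ}
    (hv : M.mulVec v = α • v) (hw : M.mulVec w = β • w) (hab : α ≠ β) :
    inn v w = 0 := by
  have h := adjoint' M v w
  rw [hw, star_eig hM hv, inn_smul_right, inn_smul_left, Complex.conj_conj] at h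
  have : (α - β) * inn v w = 0 := by linear_combination h.symm
  rcases mul_eq_zero.mp this with h' | h'
  · exact absurd (sub_eq_zero.mp h') hab
  · exact h'

lemma ker_sq (hM : M * Mᴴ = Mᴴ * M) {v : Fin n → ℂ}
    (h : M.mulVec (M.mulVec v) = 0) : M.mulVec v = 0 := by
  have h1 : inn (Mᴴ.mulVec (M.mulVec v)) (Mᴴ.mulVec (M.mulVec v)) = 0 := by
    rw [adjoint, conjTranspose_conjTranspose, mulVec_mulVec, hM, ← mulVec_mulVec, h,
      mulVec_zero, inn_zero_right]
  have h2 : Mᴴ.mulVec (M.mulVec v) = 0 := eq_zero_of_inn_self h1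
  have h3 : inn (M.mulVec v) (M.mulVec v) = 0 := by
    rw [adjoint, h2, inn_zero_right]
  exact eq_zero_of_inn_self h3

lemma ker_pow (hM : M * Mᴴ = Mᴴ * M) :
    ∀ (k : ℕ) {v : Fin n → ℂ}, (M ^ (k + 1)).mulVec v = 0 → M.mulVec v = 0
  | 0, v, h => by simpa using h
  | (k + 1), v, h => by
    have h' : (M ^ (k + 1)).mulVec (M.mulVec v) = 0 := by
      rw [mulVec_mulVec, ← pow_succ]; exact h
    exact ker_sq hM (ker_pow hM k h')


lemma maxGen_eq (hM : M * Mᴴ = Mᴴ * M) (μ : ℂ) :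
    Module.End.maxGenEigenspace (Matrix.toLinAlgEquiv' M) μ
      = Module.End.eigenspace (Matrix.toLinAlgEquiv' M) μ := by
  refine le_antisymm ?_ ((Module.End.genEigenspace (Matrix.toLinAlgEquiv' M) μ).monotone le_top)
  intro x hx
  obtain ⟨k, hk⟩ := (Module.End.mem_maxGenEigenspace _ _ _).mp hx
  have hx' : ((M - μ • 1) ^ k).mulVec x = 0 := by
    have h1 : (Matrix.toLinAlgEquiv' ((M - μ • 1) ^ k)) x = 0 := by
      rw [map_pow, map_sub, _root_.map_smul, _root_.map_one]; exact hk
    exact h1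
  have hker : (M - μ • 1).mulVec x = 0 := by
    rcases k with _ | k
    · simp only [pow_zero, one_mulVec] at hx'
      simp [hx']
    · exact ker_pow (normal_sub hM μ) k hx'
  rw [Module.End.mem_eigenspace_iff, Matrix.toLinAlgEquiv'_apply]
  have : M.mulVec x - μ • x = 0 := by
    simpa [sub_mulVec, smul_mulVec, one_mulVec] using hker
  exact sub_eq_zero.mp this
  

lemma iSup_eig_top (hM : M * Mᴴ = Mᴴ * M) :
    ⨆ μ : ℂ, Module.End.eigenspace (Matrix.toLinAlgEquiv' M) μ = ⊤ := by
  have h := Module.End.iSup_maxGenEigenspace_eq_top (Matrix.toLinAlgEquiv' M)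
  simp only [maxGen_eq hM] at h
  exact h

lemma eigSpan_eq (M : Matrix (Fin n) (Fin n) ℂ) (lam : ℂ) (ε : ℝ) :
    eigSpan M lam ε
      = ⨆ α ∈ {α : ℂ | ‖lam - α‖ ≤ ε},
          Module.End.eigenspace (Matrix.toLinAlgEquiv' M) α := by
  apply le_antisymm
  · rw [eigSpan]
    apply Submodule.span_le.mpr
    rintro v ⟨hv0, α, hα, hvα⟩
    have hmem : v ∈ Module.End.eigenspace (Matrix.toLinAlgEquiv' M) α :=
      Module.End.mem_eigenspace_iff.mpr (by rw [Matrix.toLinAlgEquiv'_apply]; exact hvα)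
    exact Submodule.mem_iSup_of_mem α (Submodule.mem_iSup_of_mem hα hmem)
  · refine iSup₂_le fun α hα v hv => ?_
    rcases eq_or_ne v 0 with rfl | hv0
    · exact Submodule.zero_mem _
    · exact Submodule.subset_span
        ⟨hv0, α, hα, by rw [← Matrix.toLinAlgEquiv'_apply]
                        exact Module.End.mem_eigenspace_iff.mp hv⟩

lemma pyth (hM : M * Mᴴ = Mᴴ * M) {t : Finset ℂ} {g : ℂ → Fin n → ℂ}
    (hg : ∀ α ∈ t, M.mulVec (g α) = α • g α) :
    inn (∑ α ∈ t, g α) (∑ α ∈ t, g α) = ∑ α ∈ t, inn (g α) (g α) := by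
  rw [inn_sum_left]
  refine Finset.sum_congr rfl fun α hα => ?_
  rw [inn_sum_right]
  refine Finset.sum_eq_single α (fun β hβ hne => ?_) (fun h => absurd hα h)
  exact inn_eig_orth hM (hg α hα) (hg β hβ) (Ne.symm hne)

lemma decomp (hM : M * Mᴴ = Mᴴ * M) (lam : ℂ) (s : Set ℂ) {v : Fin n → ℂ}
    (hv : v ∈ ⨆ α ∈ s, Module.End.eigenspace (Matrix.toLinAlgEquiv' M) α) :
    ∃ (t : Finset ℂ) (r : ℂ → ℝ),
      (↑t : Set ℂ) ⊆ s ∧ (∀ α ∈ t, 0 ≤ r α) ∧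
      (inn v v).re = ∑ α ∈ t, r α ∧
      (inn (M.mulVec v - lam • v) (M.mulVec v - lam • v)).re
        = ∑ α ∈ t, Complex.normSq (α - lam) * r α := by
  classical
  rw [iSup_subtype'] at hv
  obtain ⟨f, hf, hsum⟩ := (Submodule.mem_iSup_iff_exists_finsupp _ v).mp hv
  set g : ℂ → Fin n → ℂ := fun α => if h : α ∈ s then f ⟨α, h⟩ else 0 with hgdef
  set t : Finset ℂ := f.support.map ⟨Subtype.val, Subtype.val_injective⟩ with htdef
  have hts : (↑t : Set ℂ) ⊆ s := by
    intro α hα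
    simp only [htdef, Finset.coe_map, Set.mem_image, Finset.mem_coe,
      Function.Embedding.coeFn_mk] at hα
    obtain ⟨⟨β, hβ⟩, _, rfl⟩ := hα
    exact hβ
  have hg : ∀ α ∈ t, M.mulVec (g α) = α • g α := by
    intro α hα
    have hαs : α ∈ s := hts hα
    have := hf ⟨α, hαs⟩
    rw [Module.End.mem_eigenspace_iff, Matrix.toLinAlgEquiv'_apply] at this
    simp only [hgdef, dif_pos hαs]
    exact this
  have hvsum : v = ∑ α ∈ t, g α := by
    rw [← hsum, Finsupp.sum, htdef, Finset.sum_map]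
    refine Finset.sum_congr rfl fun i _ => ?_
    simp only [hgdef, Function.Embedding.coeFn_mk, dif_pos i.2]
  set r : ℂ → ℝ := fun α => (inn (g α) (g α)).re with hrdef
  refine ⟨t, r, hts, fun α _ => inn_self_re_nonneg _, ?_, ?_⟩
  · rw [hvsum, pyth hM hg, Complex.re_sum]
  · have hw : M.mulVec v - lam • v = ∑ α ∈ t, (α - lam) • g α := by
      rw [hvsum]
      have h1 : M.mulVec (∑ α ∈ t, g α) = ∑ α ∈ t, M.mulVec (g α) := by
        have := map_sum M.mulVecLin g t
        simpa only [Matrix.mulVecLin_apply] using this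
      rw [h1, Finset.smul_sum, ← Finset.sum_sub_distrib]
      refine Finset.sum_congr rfl fun α hα => ?_
      rw [hg α hα, sub_smul]
    have hg' : ∀ α ∈ t, M.mulVec ((α - lam) • g α) = α • ((α - lam) • g α) := by
      intro α hα
      rw [Matrix.mulVec_smul, hg α hα, smul_comm]
    rw [hw, pyth hM hg', Complex.re_sum]
    refine Finset.sum_congr rfl fun α hα => ?_
    rw [inn_smul_left, inn_smul_right, ← mul_assoc, ← Complex.normSq_eq_conj_mul_self,
      inn_self_eq, ← Complex.ofReal_mul]
    rw [hrdef]
    simp [inn_self_eq]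

lemma boundA (hM : M * Mᴴ = Mᴴ * M) (lam : ℂ) (ε : ℝ) {v : Fin n → ℂ}
    (hv : v ∈ ⨆ α ∈ {α : ℂ | ‖lam - α‖ ≤ ε},
        Module.End.eigenspace (Matrix.toLinAlgEquiv' M) α) :
    (inn (M.mulVec v - lam • v) (M.mulVec v - lam • v)).re ≤ ε ^ 2 * (inn v v).re := by
  obtain ⟨t, r, hts, hr, h1, h2⟩ := decomp hM lam _ hv
  rw [h1, h2, Finset.mul_sum]
  refine Finset.sum_le_sum fun α hα => ?_
  have hαs : ‖lam - α‖ ≤ ε := hts hα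
  have : Complex.normSq (α - lam) ≤ ε ^ 2 := by
    rw [← Complex.sq_norm]
    have habs : ‖α - lam‖ ≤ ε := by rwa [norm_sub_rev]
    exact pow_le_pow_left₀ (norm_nonneg _) habs 2
  exact mul_le_mul_of_nonneg_right this (hr α hα)

lemma boundB (hM : M * Mᴴ = Mᴴ * M) (lam : ℂ) (ε : ℝ) (hε : 0 ≤ ε) {v : Fin n → ℂ}
    (hv : v ∈ ⨆ α ∈ {α : ℂ | ¬ ‖lam - α‖ ≤ ε},
        Module.End.eigenspace (Matrix.toLinAlgEquiv' M) α) (hv0 : v ≠ 0) :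
    ε ^ 2 * (inn v v).re < (inn (M.mulVec v - lam • v) (M.mulVec v - lam • v)).re := by
  obtain ⟨t, r, hts, hr, h1, h2⟩ := decomp hM lam _ hv
  have hpos : 0 < ∑ α ∈ t, r α := h1 ▸ inn_self_re_pos hv0
  obtain ⟨α₀, hα₀, hrα₀⟩ : ∃ α ∈ t, 0 < r α := by
    by_contra h
    push_neg at h
    have : ∑ α ∈ t, r α ≤ 0 := Finset.sum_nonpos fun α hα => h α hα
    linarith
  have hlt : ∀ α ∈ t, ε ^ 2 < Complex.normSq (α - lam) := by
    intro α hα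
    have : ε < ‖lam - α‖ := lt_of_not_ge (hts hα)
    rw [← Complex.sq_norm, norm_sub_rev]
    exact pow_lt_pow_left₀ this hε two_ne_zero
  rw [h1, h2, Finset.mul_sum]
  refine Finset.sum_lt_sum (fun α hα => mul_le_mul_of_nonneg_right (le_of_lt (hlt α hα)) (hr α hα))
    ⟨α₀, hα₀, mul_lt_mul_of_pos_right (hlt α₀ hα₀) hrα₀⟩


lemma main_ineq (A B : Matrix (Fin n) (Fin n) ℂ)
    (hA : A * Aᴴ = Aᴴ * A) (hB : B * Bᴴ = Bᴴ * B) (lam : ℂ) (ε : ℝ) (hε : 0 ≤ ε) :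
    finrank ℂ (eigSpan A lam ε) ≤ finrank ℂ (eigSpan B lam ε) + (A - B).rank := by
  classical
  set K := LinearMap.ker (A - B).mulVecLin with hK
  set S := eigSpan A lam ε ⊓ K with hS
  set C := ⨆ α ∈ {α : ℂ | ¬ ‖lam - α‖ ≤ ε},
      Module.End.eigenspace (Matrix.toLinAlgEquiv' B) α with hC
  -- top decomposition
  have htop : eigSpan B lam ε ⊔ C = ⊤ := by
    refine le_antisymm le_top ?_
    rw [← iSup_eig_top hB, eigSpan_eq B lam ε]
    refine iSup_le fun α => ?_
    by_cases h : ‖lam - α‖ ≤ ε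
    · exact le_sup_of_le_left (le_iSup₂ (f := fun α _ =>
        Module.End.eigenspace (Matrix.toLinAlgEquiv' B) α) α h)
    · exact le_sup_of_le_right (le_iSup₂ (f := fun α _ =>
        Module.End.eigenspace (Matrix.toLinAlgEquiv' B) α) α h)
  -- injectivity
  have hSC : ∀ v ∈ S, v ∈ C → v = 0 := by
    intro v hvS hvC
    by_contra hv0
    have hvA : v ∈ eigSpan A lam ε := hvS.1
    have hvK : (A - B).mulVec v = 0 := hvS.2
    have hAB : A.mulVec v = B.mulVec v := by
      rw [sub_mulVec] at hvK
      exact sub_eq_zero.mp hvK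
    have h1 := boundA hA lam ε ((eigSpan_eq A lam ε) ▸ hvA)
    have h2 := boundB hB lam ε hε hvC hv0
    rw [hAB] at h1
    linarith
  have hinj : Function.Injective (C.mkQ.comp S.subtype) := by
    rw [← LinearMap.ker_eq_bot]
    refine (Submodule.eq_bot_iff _).mpr fun x hx => ?_
    have hx' : (x : Fin n → ℂ) ∈ C := by
      have := hx
      rw [LinearMap.mem_ker, LinearMap.comp_apply, Submodule.subtype_apply,
        Submodule.mkQ_apply, Submodule.Quotient.mk_eq_zero] at this
      exact this
    exact Subtype.ext (hSC x x.2 hx')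
  have hd1 : finrank ℂ S ≤ finrank ℂ ((Fin n → ℂ) ⧸ C) :=
    LinearMap.finrank_le_finrank_of_injective hinj
  -- surjectivity
  have hsurj : Function.Surjective (C.mkQ.comp (eigSpan B lam ε).subtype) := by
    intro q
    obtain ⟨x, rfl⟩ := C.mkQ_surjective q
    have hx : x ∈ eigSpan B lam ε ⊔ C := htop ▸ Submodule.mem_top
    obtain ⟨r, hr, c, hc, rfl⟩ := Submodule.mem_sup.mp hx
    refine ⟨⟨r, hr⟩, ?_⟩
    rw [LinearMap.comp_apply, Submodule.subtype_apply, Submodule.mkQ_apply,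
      Submodule.mkQ_apply]
    rw [Submodule.Quotient.eq]
    simpa using Submodule.neg_mem _ hc
  have hd2 : finrank ℂ ((Fin n → ℂ) ⧸ C) ≤ finrank ℂ (eigSpan B lam ε) := by
    have := LinearMap.finrank_range_le (C.mkQ.comp (eigSpan B lam ε).subtype)
    rwa [LinearMap.range_eq_top.mpr hsurj, finrank_top] at this
  -- dimension counting
  have hsum := Submodule.finrank_sup_add_finrank_inf_eq (eigSpan A lam ε) K
  have hle : finrank ℂ ((eigSpan A lam ε) ⊔ K : Submodule ℂ (Fin n → ℂ))
      ≤ finrank ℂ (Fin n → ℂ) := Submodule.finrank_le _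
  have hrn := LinearMap.finrank_range_add_finrank_ker (A - B).mulVecLin
  have hrank : (A - B).rank = finrank ℂ (LinearMap.range (A - B).mulVecLin) := rfl
  rw [← hS] at hsum
  rw [← hK] at hrn
  omega


end EigAux

/-- Theorem 4: for normal matrices the dimensions of `eigSpan` differ by at
most the rank of the difference. -/
theorem stmt_6 {n : ℕ} (A B : Matrix (Fin n) (Fin n) ℂ)
    (hA : A * A.conjTranspose = A.conjTranspose * A)
    (hB : B * B.conjTranspose = B.conjTranspose * B)
    (lam : ℂ) (ε : ℝ) (hε : 0 ≤ ε) :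
    |(Module.finrank ℂ (eigSpan A lam ε) : ℤ) -
      (Module.finrank ℂ (eigSpan B lam ε) : ℤ)| ≤ (A - B).rank := by
  have h1 := EigAux.main_ineq A B hA hB lam ε hε
  have h2 := EigAux.main_ineq B A hB hA lam ε hε
  have hr : (B - A).rank = (A - B).rank := by
    have hBA : B - A = -(A - B) := (neg_sub A B).symm
    rw [hBA, Matrix.rank]
    have : (-(A - B)).mulVecLin = -((A - B).mulVecLin) := by
      ext v
      simp [Matrix.mulVecLin_apply, Matrix.neg_mulVec]
    rw [this, LinearMap.range_neg]
    rfl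
  rw [hr] at h2
  have h1' : (Module.finrank ℂ (eigSpan A lam ε) : ℤ)
      ≤ (Module.finrank ℂ (eigSpan B lam ε) : ℤ) + ((A - B).rank : ℤ) := by exact_mod_cast h1
  have h2' : (Module.finrank ℂ (eigSpan B lam ε) : ℤ)
      ≤ (Module.finrank ℂ (eigSpan A lam ε) : ℤ) + ((A - B).rank : ℤ) := by exact_mod_cast h2
  rw [abs_sub_le_iff]
  exact ⟨by linarith, by linarith⟩
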